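/- Let p : F → E be a functor, f : ξ → ξ' a cartesian morphism lying over φ : S → S', G a finite group of order n, and ρ : G → Aut_S(ξ) a group homomorphism. Assume the kernel A = Aut_ξ(ξ') of the restriction homomorphism res : Aut_{S'}(ξ') → Aut_S(ξ) is abelian and uniquely n-divisible (for every h ∈ A there is a unique g ∈ A with g^n = h). If for every σ ∈ G there exists σ' ∈ Aut_{S'}(ξ') with res(σ') = ρ(σ), then there exists a group homomorphism ρ' : G → Aut_{S'}(ξ') with res ∘ ρ' = ρ. -/

import Mathlib

open CategoryTheory

/-- A morphism `f : ξ ⟶ ξ'` is cartesian for the functor `p : F ⥤ E` if for every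
object `ζ` lying over `S = p.obj ξ`, composition with `f` gives a bijection between
morphisms `ζ ⟶ ξ` lying over `𝟙 S` and morphisms `ζ ⟶ ξ'` lying over `φ = p.map f`. -/
def IsCartesianMor {F E : Type*} [Category F] [Category E] (p : F ⥤ E)
    {ξ ξ' : F} (f : ξ ⟶ ξ') : Prop :=
  ∀ (ζ : F) (e : p.obj ζ = p.obj ξ),
    Function.Bijective (fun h : {h : ζ ⟶ ξ // p.map h = eqToHom e} =>
      (⟨h.1 ≫ f, by rw [p.map_comp, h.2]⟩ :
        {g : ζ ⟶ ξ' // p.map g = eqToHom e ≫ p.map f}))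

/-- The subgroup of `Aut ξ` consisting of automorphisms lying over the identity
of `S = p.obj ξ`. -/
def vertAut {F E : Type*} [Category F] [Category E] (p : F ⥤ E) (ξ : F) :
    Subgroup (Aut ξ) where
  carrier := {σ | p.map σ.hom = 𝟙 (p.obj ξ)}
  one_mem' := p.map_id ξ
  mul_mem' := by
    intro σ τ hσ hτ
    show p.map (τ.hom ≫ σ.hom) = 𝟙 _
    rw [p.map_comp, hσ, hτ, Category.id_comp]
  inv_mem' := by
    intro σ hσ
    show p.map σ.symm.hom = 𝟙 _
    have h : p.map σ.hom = 𝟙 _ := hσ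
    calc p.map σ.inv = p.map σ.hom ≫ p.map σ.inv := by rw [h, Category.id_comp]
      _ = p.map (σ.hom ≫ σ.inv) := (p.map_comp _ _).symm
      _ = 𝟙 _ := (congrArg p.map (Iso.hom_inv_id σ)).trans (p.map_id ξ)


theorem key_extension {Γ Δ G : Type*} [Group Γ] [Group Δ] [Group G] [Finite G]
    (res : Γ →* Δ) (ρ : G →* Δ)
    (hA : ∀ a b : Γ, a ∈ res.ker → b ∈ res.ker → a * b = b * a)
    (hdiv : ∀ h : Γ, h ∈ res.ker →
      ∃! g : Γ, g ∈ res.ker ∧ g ^ (Nat.card G) = h)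
    (hsurj : ∀ σ : G, ρ σ ∈ res.range) :
    ∃ ρ' : G →* Γ, res.comp ρ' = ρ := by
  classical
  have : Fintype G := Fintype.ofFinite G
  set n := Nat.card G with hn
  choose s hs using fun σ => MonoidHom.mem_range.mp (hsurj σ)
  letI : CommGroup res.ker :=
    { (inferInstance : Group res.ker) with
      mul_comm := fun a b => Subtype.ext (hA a b a.2 b.2) }
  -- the 2-cocycle
  have hcmem : ∀ σ τ : G, s σ * s τ * (s (σ * τ))⁻¹ ∈ res.ker := by
    intro σ τ
    simp only [MonoidHom.mem_ker, map_mul, map_inv, hs]; group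
  set cA : G → G → res.ker := fun σ τ => ⟨s σ * s τ * (s (σ * τ))⁻¹, hcmem σ τ⟩
    with hcA
  have cA_def : ∀ σ τ, (cA σ τ : Γ) = s σ * s τ * (s (σ * τ))⁻¹ := fun _ _ => rfl
  -- the G-action on the kernel by conjugation via s
  have hactmem : ∀ (σ : G) (a : res.ker), s σ * ↑a * (s σ)⁻¹ ∈ res.ker := by
    intro σ a
    have ha : res (a : Γ) = 1 := a.2
    simp [MonoidHom.mem_ker, map_mul, ha, hs]
  set act : G → res.ker →* res.ker := fun σ =>
    { toFun := fun a => ⟨s σ * ↑a * (s σ)⁻¹, hactmem σ a⟩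
      map_one' := by ext; simp
      map_mul' := by intro a b; ext; push_cast; group } with hact
  have act_def : ∀ (σ : G) (a : res.ker),
      ((act σ a : res.ker) : Γ) = s σ * ↑a * (s σ)⁻¹ := fun _ _ => rfl
  -- the cocycle identity
  have hcoc : ∀ σ τ υ : G,
      cA σ τ * cA (σ * τ) υ = act σ (cA τ υ) * cA σ (τ * υ) := by
    intro σ τ υ
    ext
    push_cast [cA_def, act_def]
    rw [show σ * τ * υ = σ * (τ * υ) from mul_assoc σ τ υ]
    group
  -- averaging
  set d : G → res.ker := fun σ => ∏ υ : G, cA σ υ with hdd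
  have hd : ∀ σ τ : G, cA σ τ ^ n * d (σ * τ) = act σ (d τ) * d σ := by
    intro σ τ
    have h1 : ∏ υ : G, (cA σ τ * cA (σ * τ) υ)
        = ∏ υ : G, (act σ (cA τ υ) * cA σ (τ * υ)) :=
      Finset.prod_congr rfl fun υ _ => hcoc σ τ υ
    rw [Finset.prod_mul_distrib, Finset.prod_mul_distrib, Finset.prod_const,
      Finset.card_univ, ← Nat.card_eq_fintype_card, ← hn, ← map_prod] at h1
    have h2 : ∏ υ : G, cA σ (τ * υ) = d σ :=
      Fintype.prod_equiv (Equiv.mulLeft τ) _ _ fun υ => rfl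
    rw [h2] at h1
    exact h1
  -- unique n-th roots in the kernel
  have hroot : ∀ x y : res.ker, x ^ n = y ^ n → x = y := by
    intro x y h
    obtain ⟨g, -, hu⟩ := hdiv ((y : Γ) ^ n) (pow_mem y.2 n)
    have hx : (x : Γ) = g := hu _ ⟨x.2, by
      rw [show (x : Γ) ^ n = ((x ^ n : res.ker) : Γ) by push_cast; rfl, h]; push_cast; rfl⟩
    have hy : (y : Γ) = g := hu _ ⟨y.2, rfl⟩
    exact Subtype.ext (hx.trans hy.symm)
  have he : ∀ σ : G, ∃ g : res.ker, g ^ n = d σ := by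
    intro σ
    obtain ⟨g, ⟨hg1, hg2⟩, -⟩ := hdiv (d σ) (d σ).2
    exact ⟨⟨g, hg1⟩, Subtype.ext (by push_cast; exact hg2)⟩
  choose e heq using he
  -- the coboundary relation
  have h5 : ∀ σ τ : G, cA σ τ = act σ (e τ) * e σ * (e (σ * τ))⁻¹ := by
    intro σ τ
    refine hroot _ _ ?_
    rw [mul_pow, mul_pow, inv_pow, ← map_pow, heq, heq, heq]
    exact eq_mul_inv_of_mul_eq (hd σ τ)
  -- the corrected lift
  refine ⟨MonoidHom.mk' (fun σ => (↑(e σ))⁻¹ * s σ) ?_, ?_⟩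
  · intro σ τ
    have hc := congrArg (Subtype.val) (h5 σ τ)
    push_cast [cA_def, act_def] at hc
    have hZ : s (σ * τ)
        = (s σ * ↑(e τ) * (s σ)⁻¹ * ↑(e σ) * (↑(e (σ * τ)))⁻¹)⁻¹ * s σ * s τ := by
      rw [← hc]; group
    show (↑(e (σ * τ)))⁻¹ * s (σ * τ) = ((↑(e σ))⁻¹ * s σ) * ((↑(e τ))⁻¹ * s τ)
    rw [hZ]
    group
  · ext σ
    have hm : res ↑(e σ) = 1 := (e σ).2
    simp [map_mul, hm, hs]


/-- If `G` is a finite group of order `n`, the kernel `A = Aut_ξ(ξ')` of the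
restriction homomorphism is abelian and uniquely `n`-divisible, and every `ρ(σ)`
lies in the image of `res`, then the `G`-action extends: there is a homomorphism
`ρ' : G → Aut_{S'}(ξ')` with `res ∘ ρ' = ρ`. -/
theorem extension_exists_of_uniquely_divisible {F E : Type*} [Category F] [Category E]
    (p : F ⥤ E) {ξ ξ' : F} (f : ξ ⟶ ξ') (hf : IsCartesianMor p f)
    {G : Type*} [Group G] [Finite G] (ρ : G →* vertAut p ξ)
    (res : vertAut p ξ' →* vertAut p ξ)
    (hres : ∀ σ' : vertAut p ξ',
      f ≫ (σ' : Aut ξ').hom = ((res σ' : Aut ξ)).hom ≫ f)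
    (hA : ∀ a b : vertAut p ξ', a ∈ res.ker → b ∈ res.ker → a * b = b * a)
    (hdiv : ∀ h : vertAut p ξ', h ∈ res.ker →
      ∃! g : vertAut p ξ', g ∈ res.ker ∧ g ^ (Nat.card G) = h)
    (hsurj : ∀ σ : G, ρ σ ∈ res.range) :
    ∃ ρ' : G →* vertAut p ξ', res.comp ρ' = ρ :=
  key_extension res ρ hA hdiv hsurj
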